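/- For 0 < ε < 1, the hyperbolic cross H_s = {ν ∈ ℕ₀^d : ∏_{k=1}^d (ν_k+1) ≤ s} satisfies #H_s ≤ ε^{−1}·s^{1+1/ε}·(1−ε)^{−d/ε}. In particular, taking ε = 1/2, #H_s ≤ 2·s³·4^d. -/

import Mathlib

/-- The hyperbolic cross `H_s ⊆ ℕ₀^d` as a finset: since each coordinate of an
index `ν ∈ H_s` satisfies `ν k + 1 ≤ s`, it can be realized as a filter of a
finite product set. -/
def hyperbolicCross (d s : ℕ) : Finset (Fin d → ℕ) :=
  (Fintype.piFinset fun _ : Fin d => Finset.range s).filter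
    (fun ν => ∏ k, (ν k + 1) ≤ s)

/-- Finite sum bound `∑_{n<s} (n+1)^{-p} ≤ p/(p-1)` for `p > 1`. -/
lemma sum_inv_rpow_le (p : ℝ) (hp : 1 < p) (s : ℕ) :
    ∑ n ∈ Finset.range s, ((n : ℝ) + 1) ^ (-p) ≤ p / (p - 1) := by
  have hp0 : 0 < p - 1 := by linarith
  have hppos : 0 < p := by linarith
  cases s with
  | zero => simp; positivity
  | succ m =>
    rw [Finset.sum_range_succ']
    have hanti : AntitoneOn (fun x : ℝ => x ^ (-p)) (Set.Icc 1 (1 + (m : ℝ))) := by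
      intro x hx y hy hxy
      have hx1 : (1 : ℝ) ≤ x := hx.1
      simp only
      rw [Real.rpow_neg (by linarith), Real.rpow_neg (by linarith)]
      exact inv_anti₀ (Real.rpow_pos_of_pos (by linarith) p)
        (Real.rpow_le_rpow (by linarith) hxy hppos.le)
    have hm : (0 : ℝ) ≤ (m : ℝ) := Nat.cast_nonneg m
    have key : ∑ i ∈ Finset.range m, (((i : ℕ) + 1 : ℝ) + 1) ^ (-p)
        ≤ ∫ x in (1 : ℝ)..(1 + (m : ℝ)), x ^ (-p) := by
      have h := hanti.sum_le_integral
      refine le_trans (le_of_eq ?_) h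
      apply Finset.sum_congr rfl
      intro i _
      push_cast
      ring_nf
    have hint : ∫ x in (1 : ℝ)..(1 + (m : ℝ)), x ^ (-p) ≤ 1 / (p - 1) := by
      have h0 : (0 : ℝ) ∉ Set.uIcc (1 : ℝ) (1 + (m : ℝ)) := by
        rw [Set.uIcc_of_le (by linarith)]
        simp only [Set.mem_Icc]
        intro h
        linarith [h.1]
      rw [integral_rpow (Or.inr ⟨by intro h; linarith, h0⟩)]
      have hb : (0 : ℝ) < 1 + (m : ℝ) := by positivity
      have hA0 : 0 < (1 + (m : ℝ)) ^ (-p + 1) := Real.rpow_pos_of_pos hb _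
      have hA1 : (1 + (m : ℝ)) ^ (-p + 1) ≤ 1 :=
        Real.rpow_le_one_of_one_le_of_nonpos (by linarith) (by linarith)
      rw [Real.one_rpow]
      have heq : ((1 + (m : ℝ)) ^ (-p + 1) - 1) / (-p + 1)
          = (1 - (1 + (m : ℝ)) ^ (-p + 1)) / (p - 1) := by
        rw [div_eq_div_iff (by linarith) (by linarith)]
        ring
      rw [heq]
      gcongr
      linarith
    have h0term : (((0 : ℕ) : ℝ) + 1) ^ (-p) = 1 := by
      norm_num
    rw [h0term]
    have htot := key.trans hint
    have hpq : p / (p - 1) = 1 / (p - 1) + 1 := by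
      field_simp
      ring
    rw [hpq]
    push_cast
    linarith

/-- The core counting bound: `#H_s ≤ s^p (p/(p-1))^d` for `p > 1`. -/
lemma hyperbolicCross_card_le (d s : ℕ) (hs : 1 ≤ s) (p : ℝ) (hp : 1 < p) :
    ((hyperbolicCross d s).card : ℝ) ≤ (s : ℝ) ^ p * (p / (p - 1)) ^ d := by
  classical
  have hp0 : 0 < p := by linarith
  have hsum := sum_inv_rpow_le p hp s
  have h1 : ((hyperbolicCross d s).card : ℝ)
      ≤ ∑ ν ∈ hyperbolicCross d s, (s : ℝ) ^ p * ∏ k, ((ν k : ℝ) + 1) ^ (-p) := by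
    rw [Finset.card_eq_sum_ones]
    push_cast
    apply Finset.sum_le_sum
    intro ν hν
    have hmem := Finset.mem_filter.mp hν
    have hprod : ((∏ k, (ν k + 1) : ℕ) : ℝ) ≤ (s : ℝ) := by exact_mod_cast hmem.2
    have hprodR : (∏ k, ((ν k : ℝ) + 1)) ≤ (s : ℝ) := by
      refine le_trans (le_of_eq ?_) hprod
      push_cast
      rfl
    have hpos : (0 : ℝ) < ∏ k, ((ν k : ℝ) + 1) := by positivity
    have hle : (∏ k, ((ν k : ℝ) + 1)) ^ p ≤ (s : ℝ) ^ p :=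
      Real.rpow_le_rpow hpos.le hprodR hp0.le
    have heq : ∏ k, ((ν k : ℝ) + 1) ^ (-p) = (∏ k, ((ν k : ℝ) + 1)) ^ (-p) :=
      Real.finset_prod_rpow _ _ (fun i _ => by positivity) _
    rw [heq, Real.rpow_neg hpos.le, ← div_eq_mul_inv,
      le_div_iff₀ (Real.rpow_pos_of_pos hpos p), one_mul]
    exact hle
  have h2 : ∑ ν ∈ hyperbolicCross d s, (s : ℝ) ^ p * ∏ k, ((ν k : ℝ) + 1) ^ (-p)
      ≤ ∑ ν ∈ Fintype.piFinset (fun _ : Fin d => Finset.range s),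
          (s : ℝ) ^ p * ∏ k, ((ν k : ℝ) + 1) ^ (-p) := by
    apply Finset.sum_le_sum_of_subset_of_nonneg (Finset.filter_subset _ _)
    intro ν _ _
    have : (0 : ℝ) < ∏ k, ((ν k : ℝ) + 1) ^ (-p) := by positivity
    positivity
  have h3 : ∑ ν ∈ Fintype.piFinset (fun _ : Fin d => Finset.range s),
        (s : ℝ) ^ p * ∏ k, ((ν k : ℝ) + 1) ^ (-p)
      = (s : ℝ) ^ p * (∑ n ∈ Finset.range s, ((n : ℝ) + 1) ^ (-p)) ^ d := by
    rw [← Finset.mul_sum]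
    congr 1
    calc ∑ ν ∈ Fintype.piFinset (fun _ : Fin d => Finset.range s),
          ∏ k, ((ν k : ℝ) + 1) ^ (-p)
        = ∏ _k : Fin d, ∑ n ∈ Finset.range s, ((n : ℝ) + 1) ^ (-p) :=
          (Finset.prod_univ_sum (fun _ : Fin d => Finset.range s)
            (fun _ n => ((n : ℝ) + 1) ^ (-p))).symm
      _ = (∑ n ∈ Finset.range s, ((n : ℝ) + 1) ^ (-p)) ^ d := by
          rw [Finset.prod_const, Finset.card_univ, Fintype.card_fin]
  have hsum0 : (0 : ℝ) ≤ ∑ n ∈ Finset.range s, ((n : ℝ) + 1) ^ (-p) := by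
    apply Finset.sum_nonneg
    intro n _
    positivity
  calc ((hyperbolicCross d s).card : ℝ)
      ≤ (s : ℝ) ^ p * (∑ n ∈ Finset.range s, ((n : ℝ) + 1) ^ (-p)) ^ d := by
        rw [← h3]; exact h1.trans h2
    _ ≤ (s : ℝ) ^ p * (p / (p - 1)) ^ d := by
        apply mul_le_mul_of_nonneg_left (pow_le_pow_left₀ hsum0 hsum d)
          (Real.rpow_nonneg (Nat.cast_nonneg s) p)

theorem hyperbolic_cross_cardinality (d s : ℕ) (hd : 1 ≤ d) (hs : 1 ≤ s)
    (ε : ℝ) (hε0 : 0 < ε) (hε1 : ε < 1) :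
    ((hyperbolicCross d s).card : ℝ)
        ≤ ε⁻¹ * (s : ℝ) ^ (1 + 1 / ε) * (1 - ε) ^ (-(d : ℝ) / ε) ∧
      (hyperbolicCross d s).card ≤ 2 * s ^ 3 * 4 ^ d := by
  have main : ∀ ε' : ℝ, 0 < ε' → ε' < 1 →
      ((hyperbolicCross d s).card : ℝ)
        ≤ ε'⁻¹ * (s : ℝ) ^ (1 + 1 / ε') * (1 - ε') ^ (-(d : ℝ) / ε') := by
    intro ε' h0 h1
    have hε' : (0 : ℝ) < 1 - ε' := by linarith
    have hp : 1 < 1 / ε' := by rw [lt_div_iff₀ h0]; linarith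
    have hcard := hyperbolicCross_card_le d s hs (1 / ε') hp
    have hq : (1 / ε') / (1 / ε' - 1) = (1 - ε')⁻¹ := by
      field_simp
    rw [hq] at hcard
    have hs1 : (1 : ℝ) ≤ (s : ℝ) := by exact_mod_cast hs
    have hA : (s : ℝ) ^ (1 / ε') ≤ (s : ℝ) ^ (1 + 1 / ε') :=
      Real.rpow_le_rpow_of_exponent_le hs1 (by linarith)
    have hB : ((1 - ε')⁻¹ : ℝ) ^ d ≤ (1 - ε') ^ (-(d : ℝ) / ε') := by
      have e1 : ((1 - ε')⁻¹ : ℝ) ^ d = (1 - ε') ^ (-(d : ℝ)) := by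
        rw [← Real.rpow_neg_one (1 - ε'), ← Real.rpow_natCast ((1 - ε') ^ (-1 : ℝ)) d,
          ← Real.rpow_mul hε'.le]
        norm_num
      rw [e1]
      apply Real.rpow_le_rpow_of_exponent_ge hε' (by linarith)
      rw [div_le_iff₀ h0]
      have hd0 : (0 : ℝ) ≤ (d : ℝ) := Nat.cast_nonneg d
      nlinarith
    have hinv : (1 : ℝ) ≤ ε'⁻¹ := by
      rw [← one_div, le_div_iff₀ h0]
      linarith
    calc ((hyperbolicCross d s).card : ℝ)
        ≤ (s : ℝ) ^ (1 / ε') * ((1 - ε')⁻¹) ^ d := hcard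
      _ ≤ (s : ℝ) ^ (1 + 1 / ε') * (1 - ε') ^ (-(d : ℝ) / ε') :=
          mul_le_mul hA hB (by positivity) (by positivity)
      _ ≤ ε'⁻¹ * (s : ℝ) ^ (1 + 1 / ε') * (1 - ε') ^ (-(d : ℝ) / ε') := by
          rw [mul_assoc]
          exact le_mul_of_one_le_left (by positivity) hinv
  refine ⟨main ε hε0 hε1, ?_⟩
  have h2 := main (1/2) (by norm_num) (by norm_num)
  have e1 : ((1:ℝ)/2)⁻¹ = 2 := by norm_num
  have e2 : (1 : ℝ) + 1 / (1/2 : ℝ) = 3 := by norm_num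
  have e3 : (s : ℝ) ^ (3 : ℝ) = ((s ^ 3 : ℕ) : ℝ) := by
    rw [show (3 : ℝ) = ((3 : ℕ) : ℝ) by norm_num, Real.rpow_natCast]
    push_cast
    ring
  have e4 : ((1 : ℝ) - 1/2) ^ (-(d : ℝ) / (1/2)) = ((4 ^ d : ℕ) : ℝ) := by
    have hexp : -(d : ℝ) / (1/2 : ℝ) = (-2 : ℝ) * (d : ℝ) := by ring
    rw [hexp, Real.rpow_mul (by norm_num : (0:ℝ) ≤ 1 - 1/2), Real.rpow_natCast]
    have hbase : ((1:ℝ) - 1/2) ^ (-2 : ℝ) = 4 := by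
      rw [show (-2 : ℝ) = ((-2 : ℤ) : ℝ) by norm_num, Real.rpow_intCast]
      norm_num
    rw [hbase]
    push_cast
    ring
  rw [e1, e2, e3, e4] at h2
  have : ((hyperbolicCross d s).card : ℝ) ≤ ((2 * s ^ 3 * 4 ^ d : ℕ) : ℝ) := by
    push_cast
    push_cast at h2
    linarith
  exact_mod_cast this
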